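/- arXiv:1202.5855 — 2 statements merged into one kernel-verified Lean document; each statement's English description precedes it below -/
import Mathlib

section
/- Let G be a graph, k ≥ 1, and r = (r_1, …, r_k) a vector of natural numbers with r_1 + ⋯ + r_k ≥ Δ(G) + 1 − k. If P = (V_1, …, V_k) is an r-partition of G (an ordered partition minimizing f(P)), then Δ(G[V_i]) ≤ r_i for each i ∈ {1, …, k}. -/
open SimpleGraph

/-- `(V_1, …, V_k)` is an ordered partition: pairwise disjoint sets covering the vertices. -/
def IsOrderedPartition {V : Type*} {k : ℕ} (P : Fin k → Finset V) : Prop :=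
  (∀ i j, i ≠ j → Disjoint (P i) (P j)) ∧ ∀ v, ∃ i, v ∈ P i

/-- `f(P) = Σ_i (|E(G[V_i])| - r_i * |V_i|)`. -/
noncomputable def partitionWeight {V : Type*} [Fintype V] (G : SimpleGraph V) {k : ℕ}
    (r : Fin k → ℕ) (P : Fin k → Finset V) : ℤ :=
  ∑ i, ((Nat.card (G.induce (P i : Set V)).edgeSet : ℤ) - (r i : ℤ) * (P i).card)

/-- An `r`-partition: an ordered partition minimizing `f`. -/
def IsRPartition {V : Type*} [Fintype V] (G : SimpleGraph V) {k : ℕ}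
    (r : Fin k → ℕ) (P : Fin k → Finset V) : Prop :=
  IsOrderedPartition P ∧
    ∀ Q : Fin k → Finset V, IsOrderedPartition Q →
      partitionWeight G r P ≤ partitionWeight G r Q

section Helpers
variable {V : Type*} [Fintype V] [DecidableEq V] (G : SimpleGraph V) [DecidableRel G.Adj]

set_option linter.unusedSectionVars false


lemma degree_induce' (S : Finset V) (x : (S : Set V)) :
    (G.induce (S : Set V)).degree x = (S.filter (fun w => G.Adj ↑x w)).card := by
  rw [degree]
  apply Finset.card_nbij (fun a => ↑a)
  · intro a ha; simp only [Finset.mem_coe, mem_neighborFinset] at ha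
    simp only [Finset.mem_coe, Finset.mem_filter]
    exact ⟨a.2, ha⟩
  · intro a _ b _ h; exact Subtype.ext h
  · intro a ha; simp only [Finset.coe_filter, Set.mem_setOf_eq] at ha
    exact ⟨⟨a, ha.1⟩, by simpa using ha.2, rfl⟩

noncomputable def ecard' (S : Finset V) : ℕ := Nat.card (G.induce (S : Set V)).edgeSet

lemma two_ecard' (S : Finset V) :
    2 * ecard' G S = ∑ x ∈ S, (S.filter (fun w => G.Adj x w)).card := by
  have h1 : ecard' G S = (G.induce (S : Set V)).edgeFinset.card := by
    rw [ecard', Nat.card_eq_fintype_card, ← edgeFinset_card]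
  rw [h1, ← SimpleGraph.sum_degrees_eq_twice_card_edges]
  rw [show (∑ x : (S:Set V), (G.induce (S:Set V)).degree x)
      = ∑ x : (S:Set V), (S.filter (fun w => G.Adj ↑x w)).card from
    Finset.sum_congr rfl fun x _ => degree_induce' G S x]
  exact (Finset.sum_subtype S (by simp) (fun v => (S.filter (fun w => G.Adj v w)).card)).symm

lemma ecard_insert' (S : Finset V) (v : V) (hv : v ∉ S) :
    ecard' G (insert v S) = ecard' G S + (S.filter (fun w => G.Adj v w)).card := by
  have h2 := two_ecard' G (insert v S)
  rw [Finset.sum_insert hv] at h2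
  have hvv : ((insert v S).filter (fun w => G.Adj v w)) = S.filter (fun w => G.Adj v w) := by
    rw [Finset.filter_insert, if_neg (G.loopless.irrefl v)]
  have hx : ∀ x ∈ S, ((insert v S).filter (fun w => G.Adj x w)).card
      = (S.filter (fun w => G.Adj x w)).card + (if G.Adj x v then 1 else 0) := by
    intro x hxS
    rw [Finset.filter_insert]
    split
    · rw [Finset.card_insert_of_notMem (fun h => hv (Finset.mem_of_mem_filter _ h))]
    · rw [Nat.add_zero]
  rw [hvv, Finset.sum_congr rfl hx, Finset.sum_add_distrib, ← two_ecard' G S,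
    Finset.sum_boole] at h2
  simp only [Nat.cast_id] at h2
  have hcomm : (S.filter (fun x => G.Adj x v)) = S.filter (fun w => G.Adj v w) := by
    apply Finset.filter_congr; intro x _; simp [G.adj_comm]
  rw [hcomm] at h2
  omega

lemma sum_part_card {k : ℕ} (P : Fin k → Finset V)
    (hd : ∀ i j, i ≠ j → Disjoint (P i) (P j)) (hc : ∀ v, ∃ i, v ∈ P i) (A : Finset V) :
    ∑ j, (A.filter (fun w => w ∈ P j)).card = A.card := by
  have : ∀ j : Fin k, (A.filter (fun w => w ∈ P j)).card = ∑ w ∈ A, if w ∈ P j then 1 else 0 := by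
    intro j; rw [Finset.card_filter]
  rw [Finset.sum_congr rfl fun j _ => this j, Finset.sum_comm]
  have hone : ∀ w ∈ A, (∑ j : Fin k, if w ∈ P j then 1 else 0) = 1 := by
    intro w _
    obtain ⟨i, hi⟩ := hc w
    rw [← Finset.card_filter]
    have h1 : Finset.univ.filter (fun j => w ∈ P j) = {i} := by
      ext j
      simp only [Finset.mem_filter, Finset.mem_univ, true_and, Finset.mem_singleton]
      constructor
      · intro hj; by_contra hne; exact (Finset.disjoint_left.mp (hd j i hne) hj) hi
      · rintro rfl; exact hi
    rw [h1, Finset.card_singleton]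
  rw [Finset.sum_congr rfl hone, Finset.sum_const, smul_eq_mul, mul_one]
end Helpers

set_option linter.unusedSectionVars false in
theorem stmt_6 {V : Type*} [Fintype V] [DecidableEq V] (G : SimpleGraph V) [DecidableRel G.Adj]
    (k : ℕ) (hk : 1 ≤ k) (r : Fin k → ℕ)
    (hr : (∑ i, r i) + k ≥ G.maxDegree + 1)
    (P : Fin k → Finset V) (hP : IsRPartition G r P) :
    ∀ i : Fin k, ∀ v ∈ P i, ((P i).filter (fun w => G.Adj v w)).card ≤ r i := by
  intro i v hv
  by_contra hgt
  push_neg at hgt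
  -- sum of in-part degrees equals degree
  have hsum : ∑ j, ((P j).filter (fun w => G.Adj v w)).card = G.degree v := by
    have h1 : ∀ j : Fin k, (P j).filter (fun w => G.Adj v w)
        = (Finset.univ.filter (fun w => G.Adj v w)).filter (fun w => w ∈ P j) := by
      intro j; ext w
      simp only [Finset.mem_filter, Finset.mem_univ, true_and]
      tauto
    rw [Finset.sum_congr rfl fun j _ => congrArg Finset.card (h1 j),
      sum_part_card P hP.1.1 hP.1.2, degree, neighborFinset_eq_filter]
  -- find a part j with few neighbors of v
  obtain ⟨j, hj⟩ : ∃ j, ((P j).filter (fun w => G.Adj v w)).card ≤ r j := by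
    by_contra h
    push_neg at h
    have h2 : ∑ j, (r j + 1) ≤ ∑ j, ((P j).filter (fun w => G.Adj v w)).card :=
      Finset.sum_le_sum fun j _ => h j
    rw [Finset.sum_add_distrib, Finset.sum_const, Finset.card_univ, Fintype.card_fin,
      smul_eq_mul, mul_one] at h2
    have h3 := G.degree_le_maxDegree v
    omega
  have hij : j ≠ i := fun h => by subst h; omega
  have hvj : v ∉ P j := fun h => Finset.disjoint_left.mp (hP.1.1 i j (Ne.symm hij)) hv h
  set Q : Fin k → Finset V :=
    fun l => if l = i then (P i).erase v else if l = j then insert v (P j) else P l with hQdef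
  have hQi : Q i = (P i).erase v := by simp [hQdef]
  have hQj : Q j = insert v (P j) := by simp [hQdef, hij]
  have hQl : ∀ l, l ≠ i → l ≠ j → Q l = P l := by intro l h1 h2; simp [hQdef, h1, h2]
  have hQpart : IsOrderedPartition Q := by
    constructor
    · intro a b hab
      rw [Finset.disjoint_left]
      intro w hwa hwb
      have key : ∀ l, w ∈ Q l → (w ∈ P l ∧ w ≠ v) ∨ (l = j ∧ w = v) := by
        intro l hl
        by_cases hli : l = i
        · subst hli; rw [hQi] at hl
          exact Or.inl ⟨Finset.mem_of_mem_erase hl, Finset.ne_of_mem_erase hl⟩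
        · by_cases hlj : l = j
          · subst hlj; rw [hQj] at hl
            rcases Finset.mem_insert.mp hl with rfl | hl'
            · exact Or.inr ⟨rfl, rfl⟩
            · exact Or.inl ⟨hl', fun e => hvj (e ▸ hl')⟩
          · rw [hQl l hli hlj] at hl
            refine Or.inl ⟨hl, fun e => ?_⟩
            exact Finset.disjoint_left.mp (hP.1.1 l i hli) hl (e ▸ hv)
      rcases key a hwa with ⟨ha, hav⟩ | ⟨rfl, rfl⟩
      · rcases key b hwb with ⟨hb, _⟩ | ⟨_, rfl⟩
        · exact Finset.disjoint_left.mp (hP.1.1 a b hab) ha hb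
        · exact hav rfl
      · rcases key b hwb with ⟨_, hbv⟩ | ⟨rfl, _⟩
        · exact hbv rfl
        · exact hab rfl
    · intro w
      by_cases hw : w = v
      · exact ⟨j, by rw [hQj, hw]; exact Finset.mem_insert_self v _⟩
      · obtain ⟨l, hl⟩ := hP.1.2 w
        by_cases hli : l = i
        · exact ⟨i, by rw [hQi]; exact Finset.mem_erase.mpr ⟨hw, hli ▸ hl⟩⟩
        · by_cases hlj : l = j
          · exact ⟨j, by rw [hQj]; exact Finset.mem_insert_of_mem (hlj ▸ hl)⟩
          · exact ⟨l, by rw [hQl l hli hlj]; exact hl⟩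
  have hle := hP.2 Q hQpart
  -- compute the weight difference
  set di := ((P i).filter (fun w => G.Adj v w)).card with hdi
  set dj := ((P j).filter (fun w => G.Adj v w)).card with hdj
  have hei : ecard' G (P i) = ecard' G ((P i).erase v) + di := by
    have h1 := ecard_insert' G ((P i).erase v) v (Finset.notMem_erase v _)
    rw [Finset.insert_erase hv] at h1
    rw [h1, Finset.filter_erase,
      Finset.erase_eq_of_notMem (fun h => G.loopless.irrefl v (Finset.mem_filter.mp h).2)]
  have hej : ecard' G (insert v (P j)) = ecard' G (P j) + dj := ecard_insert' G (P j) v hvj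
  have hci : ((P i).erase v).card + 1 = (P i).card := Finset.card_erase_add_one hv
  have hcj : (insert v (P j)).card = (P j).card + 1 := Finset.card_insert_of_notMem hvj
  have hdiff : partitionWeight G r Q - partitionWeight G r P
      = ((r i : ℤ) - di) + ((dj : ℤ) - r j) := by
    have hterm : ∀ l : Fin k, ((Nat.card (G.induce (Q l : Set V)).edgeSet : ℤ)
        - (r l : ℤ) * (Q l).card) - ((Nat.card (G.induce (P l : Set V)).edgeSet : ℤ)
        - (r l : ℤ) * (P l).card)
        = if l = i then ((r i : ℤ) - di) else if l = j then ((dj : ℤ) - r j) else 0 := by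
      intro l
      by_cases hli : l = i
      · subst hli
        rw [if_pos rfl, hQi]
        show ((ecard' G ((P l).erase v) : ℤ) - _) - ((ecard' G (P l) : ℤ) - _) = _
        rw [hei]
        have : (((P l).erase v).card : ℤ) + 1 = ((P l).card : ℤ) := by exact_mod_cast hci
        push_cast
        rw [← this]
        ring
      · by_cases hlj : l = j
        · subst hlj
          rw [if_neg hli, if_pos rfl, hQj]
          show ((ecard' G (insert v (P l)) : ℤ) - _) - ((ecard' G (P l) : ℤ) - _) = _
          rw [hej, hcj]
          push_cast
          ring
        · rw [if_neg hli, if_neg hlj, hQl l hli hlj, sub_self]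
    rw [partitionWeight, partitionWeight, ← Finset.sum_sub_distrib,
      Finset.sum_congr rfl fun l _ => hterm l]
    rw [← Finset.sum_subset (Finset.subset_univ {i, j})
      (by intro l _ hl; simp only [Finset.mem_insert, Finset.mem_singleton, not_or] at hl
          rw [if_neg hl.1, if_neg hl.2])]
    rw [Finset.sum_pair (Ne.symm hij), if_pos rfl, if_neg hij, if_pos rfl]
  have hlt : ((r i : ℤ) - di) + ((dj : ℤ) - r j) < 0 := by
    have h1 : (r i : ℤ) + 1 ≤ di := by exact_mod_cast hgt
    have h2 : (dj : ℤ) ≤ r j := by exact_mod_cast hj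
    linarith
  linarith
end

section
/- Let G be a graph, let k ≥ 2 and d be natural numbers, and let r = (r_1, …, r_k) be a vector of natural numbers with r_1 + ⋯ + r_k ≥ max{Δ(G) + 1 − k, d}. Let P = (V_1, …, V_k) be an r-partition of G, and suppose x ∈ V_i satisfies d_{V_i}(x) ≥ r_i. Then d_G(x) ≥ d; moreover, if d_G(x) = d, then for every j ≠ i one has d_{V_j}(x) ≤ r_j, so that moving x from V_i to any V_j yields an ordered partition P* with f(P*) ≤ f(P). -/
open SimpleGraph

/-- The partition obtained from `P` by moving the vertex `x` from part `i` to part `j`. -/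
def movePartition {V : Type*} [DecidableEq V] {k : ℕ} (P : Fin k → Finset V)
    (i j : Fin k) (x : V) : Fin k → Finset V :=
  fun l => if l = i then (P l).erase x else if l = j then insert x (P l) else P l

section Aux
variable {V : Type*} [Fintype V] [DecidableEq V] (G : SimpleGraph V) [DecidableRel G.Adj]

lemma induce_degree_aux (s : Finset V) (a : ↥(s : Set V)) :
    (G.induce (s : Set V)).degree a = (s.filter (fun w => G.Adj ↑a w)).card := by
  rw [SimpleGraph.degree, neighborFinset_eq_filter]
  refine Finset.card_bij (fun b _ => (b : V)) ?_ ?_ ?_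
  · intro b hb
    simp only [Finset.mem_filter, Finset.mem_univ, true_and] at hb
    simp only [Finset.mem_filter]
    exact ⟨b.2, hb⟩
  · intro b _ c _ h
    exact Subtype.ext h
  · intro w hw
    simp only [Finset.mem_filter] at hw
    exact ⟨⟨w, hw.1⟩, by simpa using hw.2, rfl⟩

lemma handshake_aux (s : Finset V) :
    2 * Nat.card (G.induce (s : Set V)).edgeSet
      = ∑ v ∈ s, (s.filter (fun w => G.Adj v w)).card := by
  rw [Nat.card_eq_fintype_card, ← Set.toFinset_card, ← SimpleGraph.edgeFinset,
    ← sum_degrees_eq_twice_card_edges]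
  rw [← Finset.sum_coe_sort s (fun v => (s.filter (fun w => G.Adj v w)).card)]
  apply Finset.sum_congr rfl
  intro a _
  exact induce_degree_aux G s a

lemma edge_insert_aux (s : Finset V) (x : V) (hx : x ∉ s) :
    Nat.card (G.induce ((insert x s : Finset V) : Set V)).edgeSet
      = Nat.card (G.induce (s : Set V)).edgeSet + (s.filter (fun w => G.Adj x w)).card := by
  have h1 := handshake_aux G (insert x s)
  have h2 := handshake_aux G s
  rw [Finset.sum_insert hx] at h1
  have hxx : (insert x s).filter (fun w => G.Adj x w) = s.filter (fun w => G.Adj x w) := by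
    rw [Finset.filter_insert, if_neg (G.loopless.irrefl x)]
  rw [hxx] at h1
  have h3 : ∀ v ∈ s, ((insert x s).filter (fun w => G.Adj v w)).card
      = (s.filter (fun w => G.Adj v w)).card + (if G.Adj v x then 1 else 0) := by
    intro v _
    rw [Finset.filter_insert]
    split
    · rw [Finset.card_insert_of_notMem (fun h => hx (Finset.mem_of_mem_filter x h))]
    · simp
  rw [Finset.sum_congr rfl h3, Finset.sum_add_distrib] at h1
  simp only [Finset.sum_boole, Nat.cast_id] at h1
  have h4 : s.filter (fun v => G.Adj v x) = s.filter (fun w => G.Adj x w) := by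
    apply Finset.filter_congr
    intro v _
    simp [G.adj_comm]
  rw [h4, ← h2] at h1
  omega

lemma edge_erase_aux (s : Finset V) (x : V) (hx : x ∈ s) :
    Nat.card (G.induce (s : Set V)).edgeSet
      = Nat.card (G.induce ((s.erase x : Finset V) : Set V)).edgeSet
        + (s.filter (fun w => G.Adj x w)).card := by
  have h := edge_insert_aux G (s.erase x) x (Finset.notMem_erase x s)
  rw [Finset.insert_erase hx] at h
  have h2 : (s.erase x).filter (fun w => G.Adj x w) = s.filter (fun w => G.Adj x w) := by
    rw [Finset.filter_erase, Finset.erase_eq_of_notMem]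
    simp [G.loopless.irrefl x]
  rw [h2] at h
  exact h

end Aux

section Move
variable {V : Type*} [DecidableEq V] {k : ℕ}

lemma move_mem_x {P : Fin k → Finset V} (hdisj : ∀ l m, l ≠ m → Disjoint (P l) (P m))
    {i j : Fin k} (hij : j ≠ i) {x : V} (hx : x ∈ P i) (l : Fin k) :
    x ∈ movePartition P i j x l ↔ l = j := by
  unfold movePartition
  by_cases hl : l = i
  · subst hl
    rw [if_pos rfl]
    simp [Ne.symm hij]
  · rw [if_neg hl]
    by_cases hl2 : l = j
    · subst hl2
      simp
    · rw [if_neg hl2]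
      simp only [hl2, iff_false]
      exact fun h => (Finset.disjoint_left.mp (hdisj l i hl) h) hx

lemma move_mem_ne {P : Fin k → Finset V} {i j : Fin k} {x v : V} (hv : v ≠ x) (l : Fin k) :
    v ∈ movePartition P i j x l ↔ v ∈ P l := by
  unfold movePartition
  by_cases hl : l = i
  · subst hl
    rw [if_pos rfl, Finset.mem_erase]
    simp [hv]
  · rw [if_neg hl]
    by_cases hl2 : l = j
    · subst hl2
      rw [if_pos rfl, Finset.mem_insert]
      simp [hv]
    · rw [if_neg hl2]

lemma move_isOP {P : Fin k → Finset V} (hP : IsOrderedPartition P)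
    {i j : Fin k} (hij : j ≠ i) {x : V} (hx : x ∈ P i) :
    IsOrderedPartition (movePartition P i j x) := by
  constructor
  · intro l m hlm
    rw [Finset.disjoint_left]
    intro v hvl hvm
    by_cases hv : v = x
    · subst hv
      rw [move_mem_x hP.1 hij hx] at hvl hvm
      exact hlm (hvl.trans hvm.symm)
    · rw [move_mem_ne hv] at hvl hvm
      exact Finset.disjoint_left.mp (hP.1 l m hlm) hvl hvm
  · intro v
    by_cases hv : v = x
    · subst hv
      exact ⟨j, by rw [move_mem_x hP.1 hij hx]⟩
    · obtain ⟨l, hl⟩ := hP.2 v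
      exact ⟨l, by rw [move_mem_ne hv]; exact hl⟩

end Move

section Weight
variable {V : Type*} [Fintype V] [DecidableEq V] (G : SimpleGraph V) [DecidableRel G.Adj] {k : ℕ}

lemma move_weight (r : Fin k → ℕ) {P : Fin k → Finset V}
    (hdisj : ∀ l m, l ≠ m → Disjoint (P l) (P m))
    {i j : Fin k} (hij : j ≠ i) {x : V} (hx : x ∈ P i) :
    partitionWeight G r (movePartition P i j x) = partitionWeight G r P
      + ((((P j).filter (fun w => G.Adj x w)).card : ℤ) - (r j : ℤ))
      - ((((P i).filter (fun w => G.Adj x w)).card : ℤ) - (r i : ℤ)) := by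
  have hxj : x ∉ P j := fun h => Finset.disjoint_left.mp (hdisj j i hij) h hx
  set F : Fin k → ℤ := fun l =>
    ((Nat.card (G.induce (movePartition P i j x l : Set V)).edgeSet : ℤ)
      - (r l : ℤ) * (movePartition P i j x l).card)
    - ((Nat.card (G.induce (P l : Set V)).edgeSet : ℤ) - (r l : ℤ) * (P l).card) with hF
  have hdiff : partitionWeight G r (movePartition P i j x) - partitionWeight G r P
      = ∑ l : Fin k, F l := by
    unfold partitionWeight
    rw [← Finset.sum_sub_distrib]
  have hzero : ∀ l ∈ Finset.univ, l ∉ ({i, j} : Finset (Fin k)) → F l = 0 := by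
    intro l _ hl
    simp only [Finset.mem_insert, Finset.mem_singleton, not_or] at hl
    have hml : movePartition P i j x l = P l := by
      unfold movePartition
      rw [if_neg hl.1, if_neg hl.2]
    simp only [hF]
    rw [hml]
    ring
  rw [← Finset.sum_subset (Finset.subset_univ ({i, j} : Finset (Fin k))) hzero,
    Finset.sum_pair (Ne.symm hij)] at hdiff
  have hmi : movePartition P i j x i = (P i).erase x := by
    unfold movePartition; rw [if_pos rfl]
  have hmj : movePartition P i j x j = insert x (P j) := by
    unfold movePartition; rw [if_neg hij, if_pos rfl]
  have hei := edge_erase_aux G (P i) x hx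
  have hej := edge_insert_aux G (P j) x hxj
  have hci : ((P i).erase x).card = (P i).card - 1 := Finset.card_erase_of_mem hx
  have hcard1 : 1 ≤ (P i).card := Finset.card_pos.mpr ⟨x, hx⟩
  have hcj : (insert x (P j)).card = (P j).card + 1 := Finset.card_insert_of_notMem hxj
  have hFi : F i = (r i : ℤ) - (((P i).filter (fun w => G.Adj x w)).card : ℤ) := by
    simp only [hF]
    rw [hmi]
    have h1 : (Nat.card (G.induce (((P i).erase x : Finset V) : Set V)).edgeSet : ℤ)
        = (Nat.card (G.induce ((P i : Finset V) : Set V)).edgeSet : ℤ)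
          - (((P i).filter (fun w => G.Adj x w)).card : ℤ) := by
      rw [hei]; push_cast; ring
    have h2 : (((P i).erase x).card : ℤ) = ((P i).card : ℤ) - 1 := by
      rw [hci]; push_cast [hcard1]; ring
    rw [h1, h2]; ring
  have hFj : F j = (((P j).filter (fun w => G.Adj x w)).card : ℤ) - (r j : ℤ) := by
    simp only [hF]
    rw [hmj]
    have h1 : (Nat.card (G.induce ((insert x (P j) : Finset V) : Set V)).edgeSet : ℤ)
        = (Nat.card (G.induce ((P j : Finset V) : Set V)).edgeSet : ℤ)
          + (((P j).filter (fun w => G.Adj x w)).card : ℤ) := by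
      rw [hej]; push_cast; ring
    have h2 : ((insert x (P j)).card : ℤ) = ((P j).card : ℤ) + 1 := by
      rw [hcj]; push_cast; ring
    rw [h1, h2]; ring
  rw [hFi, hFj] at hdiff
  linarith

lemma degree_eq_sum_parts {P : Fin k → Finset V} (hP : IsOrderedPartition P) (x : V) :
    G.degree x = ∑ l, ((P l).filter (fun w => G.Adj x w)).card := by
  have hU : Finset.univ.filter (fun w => G.Adj x w)
      = Finset.univ.biUnion (fun l => (P l).filter (fun w => G.Adj x w)) := by
    ext v
    simp only [Finset.mem_filter, Finset.mem_univ, true_and, Finset.mem_biUnion]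
    constructor
    · intro hv
      obtain ⟨l, hl⟩ := hP.2 v
      exact ⟨l, hl, hv⟩
    · rintro ⟨l, -, hl⟩
      exact hl
  rw [SimpleGraph.degree, neighborFinset_eq_filter, hU, Finset.card_biUnion]
  intro l _ m _ hlm
  exact (hP.1 l m hlm).mono (Finset.filter_subset _ _) (Finset.filter_subset _ _)

end Weight

theorem stmt_7 {V : Type*} [Fintype V] [DecidableEq V] (G : SimpleGraph V) [DecidableRel G.Adj]
    (k d : ℕ) (hk : 2 ≤ k) (r : Fin k → ℕ)
    (hr1 : (∑ i, r i) + k ≥ G.maxDegree + 1) (hr2 : (∑ i, r i) ≥ d)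
    (P : Fin k → Finset V) (hP : IsRPartition G r P)
    (i : Fin k) (x : V) (hx : x ∈ P i)
    (hdeg : ((P i).filter (fun w => G.Adj x w)).card ≥ r i) :
    d ≤ G.degree x ∧
      (G.degree x = d → ∀ j : Fin k, j ≠ i →
        ((P j).filter (fun w => G.Adj x w)).card ≤ r j ∧
        IsOrderedPartition (movePartition P i j x) ∧
        partitionWeight G r (movePartition P i j x) ≤ partitionWeight G r P) := by
  obtain ⟨hop, hmin⟩ := hP
  -- each part j ≠ i has at least r j neighbours of x
  have hge : ∀ j : Fin k, j ≠ i → r j ≤ ((P j).filter (fun w => G.Adj x w)).card := by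
    intro j hij
    have hmw := move_weight G r hop.1 hij hx
    have hle := hmin _ (move_isOP hop hij hx)
    rw [hmw] at hle
    have h1 : ((r i : ℤ) - (((P i).filter (fun w => G.Adj x w)).card : ℤ)) ≤
        (((P j).filter (fun w => G.Adj x w)).card : ℤ) - (r j : ℤ) := by linarith
    have h2 : (r i : ℤ) ≤ (((P i).filter (fun w => G.Adj x w)).card : ℤ) := by
      exact_mod_cast hdeg
    have : (r j : ℤ) ≤ (((P j).filter (fun w => G.Adj x w)).card : ℤ) := by linarith
    exact_mod_cast this
  have hall : ∀ l : Fin k, r l ≤ ((P l).filter (fun w => G.Adj x w)).card := by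
    intro l
    by_cases hl : l = i
    · subst hl; exact hdeg
    · exact hge l hl
  have hdsum := degree_eq_sum_parts G hop x
  have hdegree : (∑ l, r l) ≤ G.degree x := by
    rw [hdsum]
    exact Finset.sum_le_sum (fun l _ => hall l)
  refine ⟨le_trans hr2 hdegree, ?_⟩
  intro hdx j hij
  -- equality case : every part has exactly r neighbours
  have hsums : ∑ l, ((P l).filter (fun w => G.Adj x w)).card ≤ ∑ l, r l := by
    rw [← hdsum, hdx]; exact hr2
  have hjle : ((P j).filter (fun w => G.Adj x w)).card ≤ r j := by
    by_contra hcon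
    push_neg at hcon
    have h1 : ∑ l, r l < ∑ l, ((P l).filter (fun w => G.Adj x w)).card := by
      apply Finset.sum_lt_sum (fun l _ => hall l) ⟨j, Finset.mem_univ j, hcon⟩
    omega
  refine ⟨hjle, move_isOP hop hij hx, ?_⟩
  rw [move_weight G r hop.1 hij hx]
  have h2 : (r i : ℤ) ≤ (((P i).filter (fun w => G.Adj x w)).card : ℤ) := by exact_mod_cast hdeg
  have h3 : ((((P j).filter (fun w => G.Adj x w)).card : ℤ)) ≤ (r j : ℤ) := by exact_mod_cast hjle
  linarith
end
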